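/- Let E be an Ising energy and let m ≠ k be two non-adjacent spins, i.e., J_mk + J_km = 0. Then the energy change from simultaneously flipping both spins m and k equals the sum of the individual energy changes: Δ_{mk} = Δ_m + Δ_k. Consequently, if flipping m alone and flipping k alone both strictly increase the energy, then flipping both simultaneously also strictly increases the energy. -/
import Mathlib


/-- For non-adjacent spins `m ≠ k` (i.e. `J m k + J k m = 0`), the energy change of
flipping both spins equals the sum of the individual energy changes; consequently, if
both single flips strictly increase the energy then so does the double flip. -/
theorem ising_two_nonadjacent_flips (n : ℕ) (h : Fin n → ℝ) (J : Fin n → Fin n → ℝ)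
    (hJ : ∀ i j : Fin n, ¬ i < j → J i j = 0)
    (Z : Fin n → ℝ) (hZ : ∀ i, Z i = -1 ∨ Z i = 1)
    (m k : Fin n) (hmk : m ≠ k) (hadj : J m k + J k m = 0) :
    let E : (Fin n → ℝ) → ℝ := fun W =>
      ∑ i, h i * W i + ∑ i, ∑ j, if i < j then J i j * W i * W j else 0
    let Δ : Finset (Fin n) → ℝ := fun S =>
      E (fun i => if i ∈ S then -(Z i) else Z i) - E Z
    Δ {m, k} = Δ {m} + Δ {k}
      ∧ (0 < Δ {m} → 0 < Δ {k} → 0 < Δ {m, k}) := by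
  have h0 : J m k = 0 ∧ J k m = 0 := by
    rcases lt_trichotomy m k with hlt | heq | hlt
    · have hz := hJ k m (fun hc => absurd (hlt.trans hc) (lt_irrefl m))
      exact ⟨by linarith, hz⟩
    · exact absurd heq hmk
    · have hz := hJ m k (fun hc => absurd (hlt.trans hc) (lt_irrefl k))
      exact ⟨hz, by linarith⟩
  obtain ⟨hmk0, hkm0⟩ := h0
  intro E Δ
  have main : Δ {m, k} = Δ {m} + Δ {k} := by
    show (E _ - E Z) = (E _ - E Z) + (E _ - E Z)
    simp only [E]
    have hA : ∑ i, h i * (if i ∈ ({m, k} : Finset (Fin n)) then -(Z i) else Z i)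
        + ∑ i, h i * Z i
        = ∑ i, h i * (if i ∈ ({m} : Finset (Fin n)) then -(Z i) else Z i)
        + ∑ i, h i * (if i ∈ ({k} : Finset (Fin n)) then -(Z i) else Z i) := by
      rw [← Finset.sum_add_distrib, ← Finset.sum_add_distrib]
      apply Finset.sum_congr rfl
      intro i _
      simp only [Finset.mem_insert, Finset.mem_singleton]
      rcases eq_or_ne i m with him | him <;> rcases eq_or_ne i k with hik | hik <;>
        simp_all <;> ring
    have hB : ∀ (W : Fin n → ℝ),
        (∑ i, ∑ j, if i < j then J i j * W i * W j else 0) = ∑ i, ∑ j, if i < j then J i j * W i * W j else 0 := fun _ => rfl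
    have hC : (∑ i, ∑ j, if i < j then
          J i j * (if i ∈ ({m, k} : Finset (Fin n)) then -(Z i) else Z i)
              * (if j ∈ ({m, k} : Finset (Fin n)) then -(Z j) else Z j) else 0)
        + ∑ i, ∑ j, (if i < j then J i j * Z i * Z j else 0)
        = (∑ i, ∑ j, if i < j then
          J i j * (if i ∈ ({m} : Finset (Fin n)) then -(Z i) else Z i)
              * (if j ∈ ({m} : Finset (Fin n)) then -(Z j) else Z j) else 0)
        + ∑ i, ∑ j, if i < j then
          J i j * (if i ∈ ({k} : Finset (Fin n)) then -(Z i) else Z i)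
              * (if j ∈ ({k} : Finset (Fin n)) then -(Z j) else Z j) else 0 := by
      rw [← Finset.sum_add_distrib, ← Finset.sum_add_distrib]
      apply Finset.sum_congr rfl
      intro i _
      rw [← Finset.sum_add_distrib, ← Finset.sum_add_distrib]
      apply Finset.sum_congr rfl
      intro j _
      by_cases hij : i < j
      · simp only [if_pos hij, Finset.mem_insert, Finset.mem_singleton]
        rcases eq_or_ne i m with him | him <;> rcases eq_or_ne j k with hjk | hjk <;>
          rcases eq_or_ne i k with hik | hik <;> rcases eq_or_ne j m with hjm | hjm <;>
          simp_all <;> ring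
      · simp [hij]
    linarith [hA, hC]
  exact ⟨main, fun h1 h2 => by rw [main]; linarith⟩
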